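/- Let φ(z) ∈ ℚ[z] be a polynomial of degree d ≥ 2 with lead coefficient a, and suppose that for each place v of ℚ there are constants satisfying: λ̂_{v,φ}(y) = λ_v(y) at places of good reduction, and −(d/(d−1))·log c_v ≤ λ̂_{v,φ}(y) − λ_v(γ y) ≤ (1/(d−1))·log C_v at bad places, where γ is an e-th root of a. Then for all x ∈ ℚ and n ≥ 0, −d^{−n}·c̃ ≤ ĥ_φ(x) − (1/(e d^n))·h(a·(φ^n(x))^e) ≤ d^{−n}·C̃, where c̃ = (d/(d−1))·Σ_{v bad} log c_v and C̃ = (1/(d−1))·Σ_{v bad} log C_v. -/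

import Mathlib

open Real Finset

/-- Theorem `ghest`: accurate estimation of the canonical height via
the scaled iterate `a·(φⁿ(x))ᵉ`.  Places of `ℚ` are abstracted as an index type `ι`
carrying the standard local heights `lam v` and local canonical heights `lamhat v`,
which sum to the global height `h` and canonical height `H` respectively.  At the
(cofinitely many) good places `λ̂_v = λ_v` and `λ_v(a yᵉ) = e·λ_v(y)` (i.e.
`λ_v(γ y) = λ_v(y)` for `γ = a^{1/e}`), while at the bad places the local canonical
height differs from `λ_v(γ y) = (1/e)·λ_v(a yᵉ)` by the stated constants. -/
theorem stmt_18 (φ : Polynomial ℚ) (d : ℕ) (hdeg : φ.natDegree = d) (hd : 2 ≤ d)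
    (a : ℚ) (hlead : φ.leadingCoeff = a) (e : ℕ) (he : 1 ≤ e)
    (ι : Type*) (bad : Finset ι)
    (lam lamhat : ι → ℚ → ℝ) (h H : ℚ → ℝ)
    (c C : ι → ℝ)
    (hsum : ∀ x : ℚ, HasSum (fun w : ι => lam w x) (h x))
    (hsumhat : ∀ x : ℚ, HasSum (fun w : ι => lamhat w x) (H x))
    (hfunc : ∀ x : ℚ, H (φ.eval x) = (d : ℝ) * H x)
    (hgood : ∀ w : ι, w ∉ bad → ∀ y : ℚ,
      lamhat w y = lam w y ∧ lam w (a * y ^ e) = (e : ℝ) * lam w y)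
    (hbad : ∀ w ∈ bad, ∀ y : ℚ,
      -((d : ℝ) / ((d : ℝ) - 1)) * Real.log (c w) ≤
          lamhat w y - ((e : ℝ))⁻¹ * lam w (a * y ^ e) ∧
      lamhat w y - ((e : ℝ))⁻¹ * lam w (a * y ^ e) ≤
        (((d : ℝ) - 1))⁻¹ * Real.log (C w)) :
    ∀ (x : ℚ) (n : ℕ),
      -(((d : ℝ) ^ n)⁻¹ * ((d : ℝ) / ((d : ℝ) - 1) * ∑ w ∈ bad, Real.log (c w))) ≤
          H x - ((e : ℝ) * (d : ℝ) ^ n)⁻¹ * h (a * ((fun y => φ.eval y)^[n] x) ^ e) ∧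
      H x - ((e : ℝ) * (d : ℝ) ^ n)⁻¹ * h (a * ((fun y => φ.eval y)^[n] x) ^ e) ≤
        ((d : ℝ) ^ n)⁻¹ * ((((d : ℝ) - 1))⁻¹ * ∑ w ∈ bad, Real.log (C w)) := by

  intro x n
  have hd2 : (2:ℝ) ≤ (d:ℝ) := by exact_mod_cast hd
  have he0 : (e:ℝ) ≠ 0 := by positivity
  have hdn : (0:ℝ) < (d:ℝ) ^ n := by positivity
  have hHy' : ∀ m : ℕ, H ((fun y => φ.eval y)^[m] x) = (d:ℝ) ^ m * H x := by
    intro m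
    induction m with
    | zero => simp
    | succ k ih =>
      rw [Function.iterate_succ_apply', hfunc, ih, pow_succ]
      ring
  set y : ℚ := (fun y => φ.eval y)^[n] x with hy
  have hHy : H y = (d:ℝ) ^ n * H x := hHy' n
  -- the local difference sums to the global difference, supported on bad
  set S : ℝ := H y - (e:ℝ)⁻¹ * h (a * y ^ e) with hS
  have hsub : HasSum (fun w : ι => lamhat w y - (e:ℝ)⁻¹ * lam w (a * y ^ e)) S :=
    (hsumhat y).sub ((hsum (a * y ^ e)).mul_left _)
  have hfin : HasSum (fun w : ι => lamhat w y - (e:ℝ)⁻¹ * lam w (a * y ^ e))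
      (∑ w ∈ bad, (lamhat w y - (e:ℝ)⁻¹ * lam w (a * y ^ e))) := by
    apply hasSum_sum_of_ne_finset_zero
    intro w hw
    obtain ⟨h1, h2⟩ := hgood w hw y
    rw [h1, h2]
    field_simp
    ring
  have hSsum : S = ∑ w ∈ bad, (lamhat w y - (e:ℝ)⁻¹ * lam w (a * y ^ e)) :=
    hsub.unique hfin
  have hlow : -((d:ℝ) / ((d:ℝ) - 1) * ∑ w ∈ bad, Real.log (c w)) ≤ S := by
    rw [hSsum, Finset.mul_sum, ← Finset.sum_neg_distrib]
    apply Finset.sum_le_sum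
    intro w hw
    have := (hbad w hw y).1
    linarith [this]
  have hhigh : S ≤ ((d:ℝ) - 1)⁻¹ * ∑ w ∈ bad, Real.log (C w) := by
    rw [hSsum, Finset.mul_sum]
    exact Finset.sum_le_sum fun w hw => (hbad w hw y).2
  have hkey : H x - ((e:ℝ) * (d:ℝ) ^ n)⁻¹ * h (a * y ^ e) = ((d:ℝ) ^ n)⁻¹ * S := by
    rw [hS, hHy]
    field_simp
  constructor
  · calc -(((d:ℝ) ^ n)⁻¹ * ((d:ℝ) / ((d:ℝ) - 1) * ∑ w ∈ bad, Real.log (c w)))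
        = ((d:ℝ) ^ n)⁻¹ * -((d:ℝ) / ((d:ℝ) - 1) * ∑ w ∈ bad, Real.log (c w)) := by ring
      _ ≤ ((d:ℝ) ^ n)⁻¹ * S := by
          apply mul_le_mul_of_nonneg_left hlow (by positivity)
      _ = H x - ((e:ℝ) * (d:ℝ) ^ n)⁻¹ * h (a * y ^ e) := hkey.symm
  · rw [hkey]
    exact mul_le_mul_of_nonneg_left hhigh (by positivity)
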